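/- Fix φ ∈ (0, π/2] and let ξ* = -√2·cos φ + √(2 + 2√2 + cos²φ). Let p₂ : [-1,1] → ℝ² be the quadratic Bézier curve p₂(t) = ((1-t)/2)² b₀ + 2((1+t)/2)((1-t)/2) b₁ + ((1+t)/2)² b₂ with control points b₀ = (cos φ, -sin φ), b₁ = (ξ*, 0), b₂ = (cos φ, sin φ), and set ψ₂(t) = ‖p₂(t)‖² - 1 (Euclidean norm). Then ψ₂(t) = 0 for t ∈ {-1, -√(3-2√2), √(3-2√2), 1}. -/

import Mathlib

open Real

lemma norm_sq_two (v : EuclideanSpace ℝ (Fin 2)) : ‖v‖ ^ 2 = v 0 ^ 2 + v 1 ^ 2 := by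
  rw [EuclideanSpace.norm_eq, Real.sq_sqrt (by positivity)]
  simp [Fin.sum_univ_two, sq_abs]

lemma add_apply2 (x y : EuclideanSpace ℝ (Fin 2)) (i : Fin 2) : (x + y) i = x i + y i := rfl

lemma smul_apply2 (r : ℝ) (x : EuclideanSpace ℝ (Fin 2)) (i : Fin 2) : (r • x) i = r * x i := rfl

lemma key_alg (c s ξ r S t : ℝ) (hcs : c ^ 2 + s ^ 2 = 1) (hr : r ^ 2 = 2)
    (hS : S ^ 2 = 2 + 2 * r + c ^ 2) (hξ : ξ = -r * c + S) (ht : t ^ 2 = 3 - 2 * r) :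
    (((1 - t) / 2) ^ 2 * c + 2 * ((1 + t) / 2) * ((1 - t) / 2) * ξ + ((1 + t) / 2) ^ 2 * c) ^ 2 +
      (((1 - t) / 2) ^ 2 * (-s) + 2 * ((1 + t) / 2) * ((1 - t) / 2) * 0 + ((1 + t) / 2) ^ 2 * s) ^ 2
      - 1 = 0 := by
  have hx : ((1 - t) / 2) ^ 2 * c + 2 * ((1 + t) / 2) * ((1 - t) / 2) * ξ
      + ((1 + t) / 2) ^ 2 * c = (r - 1) * S := by
    rw [hξ]; linear_combination (c / 2 + c * r / 2 - S / 2) * ht - c * hr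
  have hy : ((1 - t) / 2) ^ 2 * (-s) + 2 * ((1 + t) / 2) * ((1 - t) / 2) * 0
      + ((1 + t) / 2) ^ 2 * s = t * s := by ring
  rw [hx, hy]
  have h1 : ((r - 1) * S) ^ 2 = (r ^ 2 - 2 * r + 1) * (2 + 2 * r + c ^ 2) := by
    rw [← hS]; ring
  have h2 : (t * s) ^ 2 = (3 - 2 * r) * s ^ 2 := by rw [← ht]; ring
  rw [h1, h2, hr]
  linear_combination (3 - 2 * r) * hcs - 4 * hr

theorem quadratic_G0_radial_error_zeros (φ : ℝ) (hφ : φ ∈ Set.Ioc 0 (π / 2))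
    (ξ : ℝ) (hξ : ξ = -Real.sqrt 2 * Real.cos φ + Real.sqrt (2 + 2 * Real.sqrt 2 + Real.cos φ ^ 2))
    (p₂ : ℝ → EuclideanSpace ℝ (Fin 2))
    (hp₂ : ∀ t : ℝ, p₂ t =
      ((1 - t) / 2) ^ 2 • (WithLp.toLp 2 ![Real.cos φ, -Real.sin φ] : EuclideanSpace ℝ (Fin 2)) +
      (2 * ((1 + t) / 2) * ((1 - t) / 2)) • (WithLp.toLp 2 ![ξ, 0] : EuclideanSpace ℝ (Fin 2)) +
      ((1 + t) / 2) ^ 2 • (WithLp.toLp 2 ![Real.cos φ, Real.sin φ] : EuclideanSpace ℝ (Fin 2)))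
    (ψ₂ : ℝ → ℝ) (hψ₂ : ∀ t : ℝ, ψ₂ t = ‖p₂ t‖ ^ 2 - 1) :
    ψ₂ (-1) = 0 ∧ ψ₂ (-Real.sqrt (3 - 2 * Real.sqrt 2)) = 0 ∧
      ψ₂ (Real.sqrt (3 - 2 * Real.sqrt 2)) = 0 ∧ ψ₂ 1 = 0 := by
  have hr : (Real.sqrt 2) ^ 2 = 2 := Real.sq_sqrt (by norm_num)
  have hS : (Real.sqrt (2 + 2 * Real.sqrt 2 + Real.cos φ ^ 2)) ^ 2
      = 2 + 2 * Real.sqrt 2 + Real.cos φ ^ 2 := by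
    apply Real.sq_sqrt; positivity
  have hcs : Real.cos φ ^ 2 + Real.sin φ ^ 2 = 1 := by
    rw [add_comm]; exact Real.sin_sq_add_cos_sq φ
  have hr' : Real.sqrt 2 ≤ 3 / 2 := by
    rw [show (3:ℝ)/2 = Real.sqrt ((3/2)^2) from (Real.sqrt_sq (by norm_num)).symm]
    apply Real.sqrt_le_sqrt; norm_num
  have ht2 : (Real.sqrt (3 - 2 * Real.sqrt 2)) ^ 2 = 3 - 2 * Real.sqrt 2 := by
    apply Real.sq_sqrt; linarith
  have main : ∀ t : ℝ, t ^ 2 = 3 - 2 * Real.sqrt 2 → ψ₂ t = 0 := by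
    intro t ht
    have h0 : (p₂ t) 0 = ((1 - t) / 2) ^ 2 * Real.cos φ
        + 2 * ((1 + t) / 2) * ((1 - t) / 2) * ξ + ((1 + t) / 2) ^ 2 * Real.cos φ := by
      rw [hp₂, add_apply2, add_apply2, smul_apply2, smul_apply2, smul_apply2]; simp
    have h1 : (p₂ t) 1 = ((1 - t) / 2) ^ 2 * (-Real.sin φ)
        + 2 * ((1 + t) / 2) * ((1 - t) / 2) * 0 + ((1 + t) / 2) ^ 2 * Real.sin φ := by
      rw [hp₂, add_apply2, add_apply2, smul_apply2, smul_apply2, smul_apply2]; simp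
    rw [hψ₂, norm_sq_two, h0, h1]
    exact key_alg _ _ _ _ _ _ hcs hr hS hξ ht
  have end1 : ∀ t : ℝ, t ^ 2 = 1 → ψ₂ t = 0 := by
    intro t ht
    have h0 : (p₂ t) 0 = ((1 - t) / 2) ^ 2 * Real.cos φ
        + 2 * ((1 + t) / 2) * ((1 - t) / 2) * ξ + ((1 + t) / 2) ^ 2 * Real.cos φ := by
      rw [hp₂, add_apply2, add_apply2, smul_apply2, smul_apply2, smul_apply2]; simp
    have h1 : (p₂ t) 1 = ((1 - t) / 2) ^ 2 * (-Real.sin φ)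
        + 2 * ((1 + t) / 2) * ((1 - t) / 2) * 0 + ((1 + t) / 2) ^ 2 * Real.sin φ := by
      rw [hp₂, add_apply2, add_apply2, smul_apply2, smul_apply2, smul_apply2]; simp
    rw [hψ₂, norm_sq_two, h0, h1]
    have h2 : (t - 1) * (t + 1) = 0 := by linear_combination ht
    rcases mul_eq_zero.mp h2 with h | h
    · have : t = 1 := by linarith
      subst this; norm_num
    · have : t = -1 := by linarith
      subst this; norm_num
  refine ⟨end1 _ (by ring), main _ (by rw [neg_pow, ht2]; ring), main _ ht2, end1 _ (by ring)⟩
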